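/- Let G be a graph and K a subset of vertices satisfying the Bouchitté–Todinca PMC conditions: (a) no component of G \ K is full for K, and (b) every pair of non-adjacent vertices x, y ∈ K satisfies x, y ∈ N(C) for some common component C of G \ K. Then the graph obtained from G by adding all missing edges inside K, and for each component C of G \ K adding all missing edges inside N(C), makes K a clique, and K is a maximal clique of this supergraph (no vertex outside K is adjacent to all of K). -/

import Mathlib

open SimpleGraph

variable {V : Type*}

/-- `C` is a connected component of `G \ K`:
nonempty, disjoint from `K`, connected, and maximal such. -/
def IsCompOf (G : SimpleGraph V) (K C : Set V) : Prop :=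
  C.Nonempty ∧ Disjoint C K ∧ (G.induce C).Connected ∧
    ∀ D : Set V, C ⊆ D → Disjoint D K → (G.induce D).Connected → D = C

/-- The neighborhood of a set `C`: vertices outside `C` with a neighbor in `C`. -/
def nbhd (G : SimpleGraph V) (C : Set V) : Set V :=
  {v | v ∉ C ∧ ∃ u ∈ C, G.Adj u v}

/-- `C` is a full component for `K` in `G`. -/
def IsFullComp (G : SimpleGraph V) (K C : Set V) : Prop :=
  IsCompOf G K C ∧ ∀ v ∈ K, ∃ u ∈ C, G.Adj u v

/-- Bouchitté–Todinca characterization of potential maximal cliques: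
(a) no full component, (b) non-adjacent pairs of `K` covered by a common component. -/
def IsPMC (G : SimpleGraph V) (K : Set V) : Prop :=
  (∀ C : Set V, IsCompOf G K C → ¬ ∀ v ∈ K, ∃ u ∈ C, G.Adj u v) ∧
  (∀ x ∈ K, ∀ y ∈ K, x ≠ y → ¬ G.Adj x y →
    ∃ C : Set V, IsCompOf G K C ∧ (∃ u ∈ C, G.Adj u x) ∧ (∃ u ∈ C, G.Adj u y))

/-- The supergraph of `G` obtained by completing `K` and each `N(C)` (for `C` a
component of `G \ K`) into cliques. -/
def fillGraph (G : SimpleGraph V) (K : Set V) : SimpleGraph V :=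
  G ⊔ SimpleGraph.fromRel (fun x y =>
    (x ∈ K ∧ y ∈ K) ∨ ∃ C : Set V, IsCompOf G K C ∧ x ∈ nbhd G C ∧ y ∈ nbhd G C)

lemma induce_singleton_connected (G : SimpleGraph V) (v : V) :
    (G.induce ({v} : Set V)).Connected := by
  haveI : Nonempty ({v} : Set V) := ⟨⟨v, rfl⟩⟩
  refine ⟨fun a b => ?_⟩
  have : a = b := by
    rcases a with ⟨_, ha⟩; rcases b with ⟨_, hb⟩
    simp only [Set.mem_singleton_iff] at ha hb
    subst ha; subst hb; rfl
  rw [this]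

/-- A vertex outside `K` cannot lie in the neighborhood of a component of `G \ K`. -/
lemma not_mem_nbhd (G : SimpleGraph V) {K C : Set V} {v : V} (hv : v ∉ K)
    (hC : IsCompOf G K C) : v ∉ nbhd G C := by
  rintro ⟨hvC, u, huC, hadj⟩
  obtain ⟨hne, hdisj, hconn, hmax⟩ := hC
  have hconn' : (G.induce (({v} : Set V) ∪ C)).Connected :=
    connected_induce_union (induce_singleton_connected G v).preconnected hconn.preconnected rfl huC hadj.symm
  have hdisj' : Disjoint (({v} : Set V) ∪ C) K := by
    rw [Set.disjoint_union_left]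
    exact ⟨Set.disjoint_singleton_left.mpr hv, hdisj⟩
  have := hmax _ Set.subset_union_right hdisj' hconn'
  exact hvC (this ▸ Set.mem_union_left C rfl : v ∈ C)

/-- Every vertex outside `K` lies in some component of `G \ K`. -/
lemma exists_comp_mem (G : SimpleGraph V) (K : Set V) {v : V} (hv : v ∉ K) :
    ∃ C : Set V, IsCompOf G K C ∧ v ∈ C := by
  classical
  have hvS : v ∈ (Kᶜ : Set V) := hv
  set C : Set V :=
    {x | ∃ hx : x ∈ (Kᶜ : Set V), (G.induce (Kᶜ : Set V)).Reachable ⟨x, hx⟩ ⟨v, hvS⟩} with hCdef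
  have hvC : v ∈ C := ⟨hvS, Reachable.refl _⟩
  refine ⟨C, ⟨⟨v, hvC⟩, ?_, ?_, ?_⟩, hvC⟩
  · rw [Set.disjoint_left]
    exact fun x hx => hx.1
  · apply induce_connected_of_patches v hvC
    intro w hw
    obtain ⟨hwS, hr⟩ := hw
    obtain ⟨p⟩ := hr
    let q : G.Walk w v := p.map (SimpleGraph.Embedding.induce (Kᶜ : Set V)).toHom
    have hsub : {x | x ∈ q.support} ⊆ C := by
      intro x hx
      have : x ∈ q.support := hx
      rw [show q.support = _ from SimpleGraph.Walk.support_map _ _, List.mem_map] at this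
      obtain ⟨y, hy, hyx⟩ := this
      have hyx' : (y : V) = x := hyx
      refine ⟨hyx' ▸ y.2, ?_⟩
      have hxy : (⟨x, hyx' ▸ y.2⟩ : (Kᶜ : Set V)) = y := Subtype.ext hyx'.symm
      rw [hxy]
      exact ⟨p.dropUntil y hy⟩
    refine ⟨{x | x ∈ q.support}, hsub, q.end_mem_support, q.start_mem_support, ?_⟩
    exact (q.connected_induce_support).preconnected _ _
  · intro D hCD hDK hDconn
    refine Set.Subset.antisymm (fun u huD => ?_) hCD
    have hDS : D ⊆ (Kᶜ : Set V) := fun x hx => Set.disjoint_left.mp hDK hx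
    have hvD : v ∈ D := hCD hvC
    have hreach : (G.induce D).Reachable ⟨u, huD⟩ ⟨v, hvD⟩ := hDconn.preconnected _ _
    exact ⟨hDS huD, hreach.map (G.induceHomOfLE hDS).toHom⟩

theorem stmt14 [Fintype V] (G : SimpleGraph V) (K : Set V)
    (ha : ∀ C : Set V, IsCompOf G K C → ¬ ∀ v ∈ K, ∃ u ∈ C, G.Adj u v)
    (hb : ∀ x ∈ K, ∀ y ∈ K, x ≠ y → ¬ G.Adj x y →
      ∃ C : Set V, IsCompOf G K C ∧ x ∈ nbhd G C ∧ y ∈ nbhd G C) :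
    (fillGraph G K).IsClique K ∧
      ∀ v : V, v ∉ K → ¬ ∀ w ∈ K, (fillGraph G K).Adj v w := by
  constructor
  · intro x hx y hy hne
    show (fillGraph G K).Adj x y
    simp only [fillGraph, sup_adj, fromRel_adj]
    exact Or.inr ⟨hne, Or.inl (Or.inl ⟨hx, hy⟩)⟩
  · intro v hv hall
    obtain ⟨C, hC, hvC⟩ := exists_comp_mem G K hv
    apply ha C hC
    intro w hw
    have h := hall w hw
    simp only [fillGraph, sup_adj, fromRel_adj] at h
    rcases h with hG | ⟨hne, h | h⟩
    · exact ⟨v, hvC, hG⟩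
    · rcases h with ⟨hvK, _⟩ | ⟨C', hC', hvN, _⟩
      · exact absurd hvK hv
      · exact absurd hvN (not_mem_nbhd G hv hC')
    · rcases h with ⟨_, hvK⟩ | ⟨C', hC', _, hvN⟩
      · exact absurd hvK hv
      · exact absurd hvN (not_mem_nbhd G hv hC')
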